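/- Let A be a determinant of an n×n matrix, A_{ij} the minor obtained by deleting row i and column j, and A_{ip,jq} the second minor obtained by deleting rows i,p and columns j,q. Then A_{ij}·A_{pq} − A_{iq}·A_{pj} = A·A_{ip,jq} (the Jacobi/Desnanot identity for minors). -/

import Mathlib

open Matrix

namespace JD

lemma succAbove_val {n : ℕ} (a : Fin (n+1)) (k : Fin n) :
    (a.succAbove k).1 = if k.1 < a.1 then k.1 else k.1 + 1 := by
  rw [Fin.succAbove]
  split_ifs with h1 h2 h3 <;>
    simp_all [Fin.lt_def, Fin.coe_castSucc, Fin.val_succ] <;> omega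

lemma succAbove_mk_of_lt {n : ℕ} (i p : Fin (n+2)) (hip : i < p) :
    i.succAbove ⟨p.1 - 1, by omega⟩ = p := by
  have hip' : i.1 < p.1 := hip
  apply Fin.ext
  rw [succAbove_val]
  simp only
  split_ifs <;> omega

lemma succAbove_succAbove_swap {n : ℕ} (i p : Fin (n+2)) (hip : i < p) (k : Fin n) :
    p.succAbove ((⟨i.1, by omega⟩ : Fin (n+1)).succAbove k) =
      i.succAbove ((⟨p.1 - 1, by omega⟩ : Fin (n+1)).succAbove k) := by
  have hip' : i.1 < p.1 := hip
  apply Fin.ext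
  rw [succAbove_val, succAbove_val, succAbove_val, succAbove_val]
  simp only
  split_ifs <;> omega

variable {R : Type*} [CommRing R]

lemma mul_updateColumn {m : Type*} [Fintype m] [DecidableEq m]
    (A N : Matrix m m R) (j : m) (v : m → R) :
    A * N.updateCol j v = (A * N).updateCol j (A *ᵥ v) := by
  ext r k
  by_cases hk : k = j <;>
    simp [mul_apply, updateCol_apply, hk, mulVec, dotProduct]

lemma updateColumn_comm {m : Type*} [Fintype m] [DecidableEq m]
    (A : Matrix m m R) {j q : m} (h : j ≠ q) (v w : m → R) :
    (A.updateCol j v).updateCol q w = (A.updateCol q w).updateCol j v := by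
  ext r k
  by_cases hq : k = q <;> by_cases hj : k = j
  · exact absurd (hj ▸ hq) h
  · simp [updateCol_apply, hq, hj, h, h.symm]
  · simp [updateCol_apply, hq, hj, h, h.symm]
  · simp [updateCol_apply, hq, hj, h, h.symm]

lemma det_one_updateColumn_two {m : Type*} [Fintype m] [DecidableEq m]
    {j q : m} (h : j ≠ q) (v w : m → R) :
    (((1 : Matrix m m R).updateCol j v).updateCol q w).det = v j * w q - v q * w j := by
  classical
  set M := ((1 : Matrix m m R).updateCol j v).updateCol q w with hM
  have col_j : ∀ r, M r j = v r := by
    intro r; rw [hM, updateCol_ne h, updateCol_self]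
  have col_q : ∀ r, M r q = w r := by
    intro r; simp [hM, updateCol_apply]
  have col_o : ∀ r k, k ≠ j → k ≠ q → M r k = if r = k then 1 else 0 := by
    intro r k h1 h2; simp [hM, updateCol_apply, h1, h2, Matrix.one_apply]
  have hswap : (Equiv.swap j q : Equiv.Perm m) ≠ 1 := by
    intro hc
    have : Equiv.swap j q j = j := by rw [hc]; rfl
    rw [Equiv.swap_apply_left] at this
    exact h this.symm
  rw [det_apply']
  rw [← Finset.sum_subset
      (Finset.subset_univ ({1, Equiv.swap j q} : Finset (Equiv.Perm m)))
      ?_]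
  · rw [Finset.sum_pair hswap.symm]
    have h1 : ∀ x, x ≠ j → x ≠ q → M ((1 : Equiv.Perm m) x) x = 1 := by
      intro x hx1 hx2
      rw [show ((1 : Equiv.Perm m) x) = x from rfl, col_o x x hx1 hx2, if_pos rfl]
    have h2 : ∀ x, x ≠ j → x ≠ q → M ((Equiv.swap j q) x) x = 1 := by
      intro x hx1 hx2
      rw [Equiv.swap_apply_of_ne_of_ne hx1 hx2, col_o x x hx1 hx2, if_pos rfl]
    have key : ∀ σ : Equiv.Perm m, (∀ x, x ≠ j → x ≠ q → M (σ x) x = 1) →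
        ∏ x, M (σ x) x = M (σ j) j * M (σ q) q := by
      intro σ hσ
      rw [← Finset.prod_subset (Finset.subset_univ ({j, q} : Finset m))
          (fun x _ hx => hσ x (fun hc => hx (by simp [hc])) (fun hc => hx (by simp [hc])))]
      exact Finset.prod_pair h
    rw [key 1 h1, key _ h2, Equiv.Perm.sign_one, Equiv.Perm.sign_swap h]
    rw [show ((1 : Equiv.Perm m) j) = j from rfl, show ((1 : Equiv.Perm m) q) = q from rfl,
      Equiv.swap_apply_left, Equiv.swap_apply_right, col_j, col_q, col_j, col_q]
    simp only [Units.val_one, Units.val_neg, Int.cast_one, Int.cast_neg, one_mul]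
    ring
  · intro σ _ hσ
    simp only [Finset.mem_insert, Finset.mem_singleton] at hσ
    push_neg at hσ
    obtain ⟨hσ1, hσ2⟩ := hσ
    have : ∃ k, k ≠ j ∧ k ≠ q ∧ σ k ≠ k := by
      by_contra hc
      push_neg at hc
      have hfix : ∀ k, k ≠ j → k ≠ q → σ k = k := fun k h1 h2 => hc k h1 h2
      have hjmem : σ j = j ∨ σ j = q := by
        by_contra h'
        push_neg at h'
        have := hfix (σ j) h'.1 h'.2
        exact h'.1 (σ.injective this)
      have hqmem : σ q = j ∨ σ q = q := by
        by_contra h'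
        push_neg at h'
        have := hfix (σ q) h'.1 h'.2
        exact h'.2 (σ.injective this)
      rcases hjmem with hj1 | hj2
      · have hq2 : σ q = q := by
          rcases hqmem with hq1 | hq2
          · exact absurd (σ.injective (hj1.trans hq1.symm)) h
          · exact hq2
        apply hσ1
        ext x
        by_cases hx1 : x = j
        · rw [hx1, hj1]; rfl
        by_cases hx2 : x = q
        · rw [hx2, hq2]; rfl
        · rw [hfix x hx1 hx2]; rfl
      · have hq1 : σ q = j := by
          rcases hqmem with hq1 | hq2
          · exact hq1
          · exact absurd (σ.injective (hj2.trans hq2.symm)) h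
        apply hσ2
        ext x
        by_cases hx1 : x = j
        · rw [hx1, hj2, Equiv.swap_apply_left]
        by_cases hx2 : x = q
        · rw [hx2, hq1, Equiv.swap_apply_right]
        · rw [hfix x hx1 hx2, Equiv.swap_apply_of_ne_of_ne hx1 hx2]
    obtain ⟨k, hk1, hk2, hk3⟩ := this
    have h0 : M (σ k) k = 0 := by rw [col_o _ _ hk1 hk2, if_neg hk3]
    have : (∏ x, M (σ x) x) = 0 := Finset.prod_eq_zero (Finset.mem_univ k) h0
    rw [this, mul_zero]

lemma det_updateColumn_single {n : ℕ} (A : Matrix (Fin (n+1)) (Fin (n+1)) R) (i j : Fin (n+1)) :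
    (A.updateCol j (Pi.single i 1)).det =
      (-1) ^ (i + j : ℕ) * (A.submatrix i.succAbove j.succAbove).det := by
  rw [← det_transpose, ← updateRow_transpose, ← adjugate_apply,
    adjugate_fin_succ_eq_det_submatrix]
  rw [show Aᵀ.submatrix j.succAbove i.succAbove = (A.submatrix i.succAbove j.succAbove)ᵀ from rfl,
    det_transpose, add_comm (j : ℕ) (i : ℕ)]

lemma single_comp_succAbove {n : ℕ} (i p : Fin (n+2)) (hip : i < p) (r : Fin (n+1)) :
    (Pi.single p 1 : Fin (n+2) → R) (i.succAbove r) =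
      (Pi.single (⟨p.1 - 1, by omega⟩ : Fin (n+1)) 1 : Fin (n+1) → R) r := by
  by_cases hr : r = (⟨p.1 - 1, by omega⟩ : Fin (n+1))
  · subst hr
    rw [succAbove_mk_of_lt i p hip, Pi.single_eq_same, Pi.single_eq_same]
  · rw [Pi.single_eq_of_ne hr, Pi.single_eq_of_ne]
    intro hc
    exact hr (Fin.succAbove_right_injective (by rw [hc, succAbove_mk_of_lt i p hip]))

lemma submatrix_updateColumn {n : ℕ} (A : Matrix (Fin (n+2)) (Fin (n+2)) R)
    (i p j q : Fin (n+2)) (hip : i < p) (hjq : j < q) :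
    (A.updateCol q (Pi.single p (1 : R))).submatrix i.succAbove j.succAbove =
      (A.submatrix i.succAbove j.succAbove).updateCol
        (⟨q.1 - 1, by omega⟩ : Fin (n+1)) (Pi.single (⟨p.1 - 1, by omega⟩ : Fin (n+1)) 1) := by
  ext r c
  rw [submatrix_apply, updateCol_apply, updateCol_apply, submatrix_apply]
  by_cases hc : c = (⟨q.1 - 1, by omega⟩ : Fin (n+1))
  · rw [if_pos hc, if_pos (by rw [hc, succAbove_mk_of_lt j q hjq]),
      single_comp_succAbove i p hip r]
  · rw [if_neg hc, if_neg]
    intro hcq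
    exact hc (Fin.succAbove_right_injective (by rw [hcq, succAbove_mk_of_lt j q hjq]))

lemma second_minor_eq {n : ℕ} (A : Matrix (Fin (n+2)) (Fin (n+2)) R)
    (i p j q : Fin (n+2)) (hip : i < p) (hjq : j < q) :
    (A.submatrix i.succAbove j.succAbove).submatrix
        (Fin.succAbove (⟨p.1 - 1, by omega⟩ : Fin (n+1)))
        (Fin.succAbove (⟨q.1 - 1, by omega⟩ : Fin (n+1))) =
      (A.submatrix p.succAbove q.succAbove).submatrix
        (Fin.succAbove (⟨i.1, Nat.lt_of_lt_of_le (Fin.lt_def.mp hip) (Nat.le_of_lt_succ p.2)⟩ : Fin (n+1)))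
        (Fin.succAbove (⟨j.1, Nat.lt_of_lt_of_le (Fin.lt_def.mp hjq) (Nat.le_of_lt_succ q.2)⟩ : Fin (n+1))) := by
  ext r c
  simp only [submatrix_apply]
  rw [succAbove_succAbove_swap i p hip r, succAbove_succAbove_swap j q hjq c]

/-- Multiplied form of the Desnanot–Jacobi identity, over any commutative ring. -/
lemma jd_mul {n : ℕ} (A : Matrix (Fin (n+2)) (Fin (n+2)) R)
    (i p j q : Fin (n+2)) (hip : i < p) (hjq : j < q) :
    A.det * ((A.submatrix i.succAbove j.succAbove).det * (A.submatrix p.succAbove q.succAbove).det -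
      (A.submatrix i.succAbove q.succAbove).det * (A.submatrix p.succAbove j.succAbove).det) =
    A.det * (A.det *
      ((A.submatrix p.succAbove q.succAbove).submatrix
        (Fin.succAbove ⟨i.1, Nat.lt_of_lt_of_le (Fin.lt_def.mp hip) (Nat.le_of_lt_succ p.2)⟩) (Fin.succAbove ⟨j.1, Nat.lt_of_lt_of_le (Fin.lt_def.mp hjq) (Nat.le_of_lt_succ q.2)⟩)).det) := by
  classical
  have hjq' : j ≠ q := Fin.ne_of_lt hjq
  have hipn : (i : ℕ) < p := hip
  have hjqn : (j : ℕ) < q := hjq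
  set M1 := (A.submatrix i.succAbove j.succAbove).det with hM1
  set M2 := (A.submatrix p.succAbove q.succAbove).det with hM2
  set M3 := (A.submatrix i.succAbove q.succAbove).det with hM3
  set M4 := (A.submatrix p.succAbove j.succAbove).det with hM4
  set M5 := ((A.submatrix p.succAbove q.succAbove).submatrix
      (Fin.succAbove (⟨i.1, by omega⟩ : Fin (n+1)))
      (Fin.succAbove (⟨j.1, by omega⟩ : Fin (n+1)))).det with hM5
  set C : Matrix (Fin (n+2)) (Fin (n+2)) R :=
    ((1 : Matrix (Fin (n+2)) (Fin (n+2)) R).updateCol j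
        (cramer A (Pi.single i 1))).updateCol q (cramer A (Pi.single p 1)) with hC
  have hAC : A * C = (A.updateCol j (A.det • (Pi.single i 1 : Fin (n+2) → R))).updateCol q
      (A.det • (Pi.single p 1 : Fin (n+2) → R)) := by
    rw [hC, mul_updateColumn, mul_updateColumn, Matrix.mul_one, mulVec_cramer, mulVec_cramer]
  have hdetAC : (A * C).det = A.det * (A.det *
      ((A.updateCol j (Pi.single i 1)).updateCol q (Pi.single p 1)).det) := by
    rw [hAC, det_updateCol_smul, updateColumn_comm _ hjq', det_updateCol_smul,
      updateColumn_comm _ (Ne.symm hjq')]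
  have hdetC : C.det = cramer A (Pi.single i 1) j * cramer A (Pi.single p 1) q -
      cramer A (Pi.single i 1) q * cramer A (Pi.single p 1) j :=
    det_one_updateColumn_two hjq' _ _
  have hD : ((A.updateCol j (Pi.single i 1)).updateCol q (Pi.single p 1)).det =
      (-1 : R) ^ ((i : ℕ) + j + ((p.1 - 1) + (q.1 - 1))) * M5 := by
    rw [updateColumn_comm _ hjq', det_updateColumn_single,
      submatrix_updateColumn A i p j q hip hjq, det_updateColumn_single,
      second_minor_eq A i p j q hip hjq, ← hM5, ← mul_assoc, ← pow_add]
  have c1 : cramer A (Pi.single i 1) j = (-1 : R) ^ ((i : ℕ) + j) * M1 := by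
    rw [cramer_apply, det_updateColumn_single, hM1]
  have c2 : cramer A (Pi.single p 1) q = (-1 : R) ^ ((p : ℕ) + q) * M2 := by
    rw [cramer_apply, det_updateColumn_single, hM2]
  have c3 : cramer A (Pi.single i 1) q = (-1 : R) ^ ((i : ℕ) + q) * M3 := by
    rw [cramer_apply, det_updateColumn_single, hM3]
  have c4 : cramer A (Pi.single p 1) j = (-1 : R) ^ ((p : ℕ) + j) * M4 := by
    rw [cramer_apply, det_updateColumn_single, hM4]
  have hmain : A.det * C.det = (A * C).det := (det_mul A C).symm
  rw [hdetC, hdetAC, hD, c1, c2, c3, c4] at hmain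
  set ε : R := (-1 : R) ^ ((i : ℕ) + j + ((p : ℕ) + q)) with hε
  have e1 : ((i : ℕ) + q) + ((p : ℕ) + j) = ((i : ℕ) + j) + ((p : ℕ) + q) := by ring
  have e2 : ((i : ℕ) + j) + ((p : ℕ) + q) = ((i : ℕ) + j + ((p.1 - 1) + (q.1 - 1))) + 2 := by
    omega
  have hδ : (-1 : R) ^ ((i : ℕ) + j + ((p.1 - 1) + (q.1 - 1))) = ε := by
    rw [hε, e2]
    conv_rhs => rw [pow_add]
    norm_num
  have expand1 : (-1 : R) ^ ((i : ℕ) + j) * M1 * ((-1 : R) ^ ((p : ℕ) + q) * M2) =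
      ε * (M1 * M2) := by
    rw [hε, pow_add]; ring
  have expand2 : (-1 : R) ^ ((i : ℕ) + q) * M3 * ((-1 : R) ^ ((p : ℕ) + j) * M4) =
      ε * (M3 * M4) := by
    rw [hε, ← e1, pow_add]; ring
  rw [expand1, expand2, hδ] at hmain
  have hεsq : ε * ε = 1 := by
    rw [hε, ← pow_add]
    exact Even.neg_one_pow ⟨(i : ℕ) + j + ((p : ℕ) + q), rfl⟩
  calc A.det * (M1 * M2 - M3 * M4)
      = (ε * ε) * (A.det * (M1 * M2 - M3 * M4)) := by rw [hεsq, one_mul]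
    _ = ε * (A.det * (ε * (M1 * M2) - ε * (M3 * M4))) := by ring
    _ = ε * (A.det * (A.det * (ε * M5))) := by rw [hmain]
    _ = (ε * ε) * (A.det * (A.det * M5)) := by ring
    _ = A.det * (A.det * M5) := by rw [hεsq, one_mul]

end JD

/-- **Jacobi/Desnanot identity for minors.**  For an `(n+2) × (n+2)` matrix `A` over a
commutative ring, with rows `i < p` and columns `j < q`, the (unsigned) minors satisfy
`A_{ij}·A_{pq} − A_{iq}·A_{pj} = det A · A_{ip,jq}`, where `A_{ij}` deletes row `i` and
column `j`, and `A_{ip,jq}` deletes rows `i,p` and columns `j,q`. -/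
theorem jacobi_desnanot_identity {R : Type*} [CommRing R] {n : ℕ}
    (A : Matrix (Fin (n+2)) (Fin (n+2)) R)
    (i p j q : Fin (n+2)) (hip : i < p) (hjq : j < q) :
    (A.submatrix i.succAbove j.succAbove).det * (A.submatrix p.succAbove q.succAbove).det -
      (A.submatrix i.succAbove q.succAbove).det * (A.submatrix p.succAbove j.succAbove).det =
    A.det *
      ((A.submatrix p.succAbove q.succAbove).submatrix
        (Fin.succAbove ⟨i.1, by omega⟩) (Fin.succAbove ⟨j.1, by omega⟩)).det := by
  classical
  set X := mvPolynomialX (Fin (n+2)) (Fin (n+2)) ℤ with hX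
  have key : (X.submatrix i.succAbove j.succAbove).det * (X.submatrix p.succAbove q.succAbove).det -
      (X.submatrix i.succAbove q.succAbove).det * (X.submatrix p.succAbove j.succAbove).det =
    X.det * ((X.submatrix p.succAbove q.succAbove).submatrix
      (Fin.succAbove (⟨i.1, by omega⟩ : Fin (n+1)))
      (Fin.succAbove (⟨j.1, by omega⟩ : Fin (n+1)))).det :=
    mul_left_cancel₀ (det_mvPolynomialX_ne_zero (Fin (n+2)) ℤ)
      (JD.jd_mul X i p j q hip hjq)
  set f : MvPolynomial (Fin (n+2) × Fin (n+2)) ℤ →+* R :=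
    (MvPolynomial.eval₂Hom (Int.castRingHom R) fun pr => A pr.1 pr.2) with hf
  have hA : (f.mapMatrix X) = A := by
    ext r c
    simp [hX, hf, mvPolynomialX]
  have hmap := congrArg f key
  rw [map_sub, _root_.map_mul, _root_.map_mul, _root_.map_mul, RingHom.map_det, RingHom.map_det,
    RingHom.map_det, RingHom.map_det, RingHom.map_det, RingHom.map_det] at hmap
  simp only [RingHom.mapMatrix_apply, ← submatrix_map] at hmap
  rw [show X.map f = A from hA] at hmap
  exact hmap
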